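/- Under the center-of-momentum kinematic setup, the identity E_CM · k⃗_CM = (E_p·k⃗ − E_k·p⃗) + ((p⃗ + k⃗) × (p⃗ × k⃗))/(E + E_CM) holds. -/

import Mathlib

/-- Euclidean dot product on `ℝ³`. -/
noncomputable def dot3 (a b : Fin 3 → ℝ) : ℝ := ∑ i, a i * b i

/-- Euclidean norm on `ℝ³`. -/
noncomputable def norm3 (a : Fin 3 → ℝ) : ℝ := Real.sqrt (dot3 a a)

/-- Cross product on `ℝ³`. -/
noncomputable def cross3 (a b : Fin 3 → ℝ) : Fin 3 → ℝ :=
  ![a 1 * b 2 - a 2 * b 1, a 2 * b 0 - a 0 * b 2, a 0 * b 1 - a 1 * b 0]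

lemma key (p k : Fin 3 → ℝ) (Ep Ek ECM : ℝ)
    (hEpos : 0 < Ep + Ek) (hECM : 0 < ECM)
    (hsq : ECM ^ 2 = (Ep + Ek) ^ 2 - dot3 (p + k) (p + k))
    (hs : 0 < dot3 (p + k) (p + k)) :
    ECM • (k + (((Ep + Ek) / ECM - 1) *
        (dot3 k ((1 / (Ep + Ek)) • (p + k)) /
          dot3 ((1 / (Ep + Ek)) • (p + k)) ((1 / (Ep + Ek)) • (p + k)))) •
          ((1 / (Ep + Ek)) • (p + k)) -
      ((Ep + Ek) / ECM * Ek) • ((1 / (Ep + Ek)) • (p + k))) =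
    (Ep • k - Ek • p) + (1 / ((Ep + Ek) + ECM)) • cross3 (p + k) (cross3 p k) := by
  have hsum : 0 < (Ep + Ek) + ECM := by linarith
  funext i
  have hs' := hs
  simp only [dot3, Fin.sum_univ_three, Pi.add_apply, Pi.smul_apply, smul_eq_mul] at hs' hsq ⊢
  set s := (p 0 + k 0) * (p 0 + k 0) + (p 1 + k 1) * (p 1 + k 1) + (p 2 + k 2) * (p 2 + k 2)
    with hsdef
  set dkq := k 0 * (p 0 + k 0) + k 1 * (p 1 + k 1) + k 2 * (p 2 + k 2) with hdkqdef
  fin_cases i <;>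
    simp only [cross3, Pi.add_apply, Pi.sub_apply, Pi.smul_apply, smul_eq_mul,
        Matrix.cons_val_zero, Matrix.cons_val_one, Matrix.head_cons,
        Matrix.cons_val_two, Matrix.tail_cons, Fin.mk_zero, Fin.mk_one, Fin.isValue,
        show ((⟨2, by omega⟩ : Fin 3)) = 2 from rfl]
  · have hne : (p 0 + k 0) ^ 2 + (p 1 + k 1) ^ 2 + (p 2 + k 2) ^ 2 ≠ 0 := by nlinarith [hs', hsdef]
    field_simp
    linear_combination ((s * k 0 - dkq * (p 0 + k 0))) * hsq
  · have hne : (p 0 + k 0) ^ 2 + (p 1 + k 1) ^ 2 + (p 2 + k 2) ^ 2 ≠ 0 := by nlinarith [hs', hsdef]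
    field_simp
    linear_combination ((s * k 1 - dkq * (p 1 + k 1))) * hsq
  · have hne : (p 0 + k 0) ^ 2 + (p 1 + k 1) ^ 2 + (p 2 + k 2) ^ 2 ≠ 0 := by nlinarith [hs', hsdef]
    field_simp
    linear_combination ((s * k 2 - dkq * (p 2 + k 2))) * hsq

/-- Center-of-momentum kinematics: the boosted dark matter momentum satisfies
`E_CM • k⃗_CM = (E_p • k⃗ − E_k • p⃗) + ((p⃗+k⃗) × (p⃗×k⃗))/(E + E_CM)`. -/
theorem kCM_decomposition
    (p k : Fin 3 → ℝ) (Ep Ek : ℝ) (hEp : 0 < Ep) (hEk : 0 < Ek)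
    (hpk : p + k ≠ 0)
    (hE : dot3 (p + k) (p + k) < (Ep + Ek) ^ 2) :
    let E := Ep + Ek
    let ECM := Real.sqrt (E ^ 2 - dot3 (p + k) (p + k))
    let β := (1 / E) • (p + k)
    let γ := E / ECM
    let kCM := k + ((γ - 1) * (dot3 k β / dot3 β β)) • β - (γ * Ek) • β
    ECM • kCM = (Ep • k - Ek • p) + (1 / (E + ECM)) • cross3 (p + k) (cross3 p k) := by
  intro E ECM β γ kCM
  have hs : 0 < dot3 (p + k) (p + k) := by
    obtain ⟨i, hi⟩ := Function.ne_iff.mp hpk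
    have h0 : (p + k) i ≠ 0 := by simpa using hi
    have h1 : 0 < (p + k) i * (p + k) i := mul_self_pos.mpr h0
    fin_cases i <;>
      · simp only [dot3, Fin.sum_univ_three]
        simp only [Fin.isValue, show ((⟨0, by omega⟩ : Fin 3)) = 0 from rfl,
          show ((⟨1, by omega⟩ : Fin 3)) = 1 from rfl,
          show ((⟨2, by omega⟩ : Fin 3)) = 2 from rfl] at h1
        nlinarith [mul_self_nonneg ((p+k) 0), mul_self_nonneg ((p+k) 1),
          mul_self_nonneg ((p+k) 2), h1]
  have hECM : 0 < ECM := Real.sqrt_pos.mpr (by simp only [E] at hE ⊢; linarith)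
  have hsq : ECM ^ 2 = (Ep + Ek) ^ 2 - dot3 (p + k) (p + k) :=
    Real.sq_sqrt (by simp only [E] at hE ⊢; linarith)
  exact key p k Ep Ek ECM (by positivity) hECM hsq hs
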